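/- For every R ∈ SO(3) one has ‖(R − Rᵀ)∨‖² = (3 − tr R)(1 + tr R); consequently, if tr R ≠ −1, then the generalized error vector satisfies ‖e_R(R)‖² = tr[I − R], i.e., its squared Euclidean norm equals the chordal metric of R. -/

import Mathlib

open Matrix

noncomputable section

/-- The cross (hat) map: `x^×` with `x^× y = x × y`. -/
def cross3 (x : Fin 3 → ℝ) : Matrix (Fin 3) (Fin 3) ℝ :=
  !![0, -x 2, x 1; x 2, 0, -x 0; -x 1, x 0, 0]

/-- The vee map: `A∨ = (A₃₂, A₁₃, A₂₁)`. -/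
def vee3 (A : Matrix (Fin 3) (Fin 3) ℝ) : Fin 3 → ℝ :=
  ![A 2 1, A 0 2, A 1 0]

/-- The Rodrigues matrix `R(α,θ) = I + sin θ · α^× + (1-cos θ) · α^×α^×`. -/
def rod (α : Fin 3 → ℝ) (θ : ℝ) : Matrix (Fin 3) (Fin 3) ℝ :=
  1 + Real.sin θ • cross3 α + (1 - Real.cos θ) • (cross3 α * cross3 α)

/-- The error vector `ψ(R) = ½(R - Rᵀ)∨`. -/
def psi3 (R : Matrix (Fin 3) (Fin 3) ℝ) : Fin 3 → ℝ :=
  (1 / 2 : ℝ) • vee3 (R - Rᵀ)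

/-- The generalized error vector `e_R(R) = (1/√(1+tr R)) (R - Rᵀ)∨`. -/
def eR (R : Matrix (Fin 3) (Fin 3) ℝ) : Fin 3 → ℝ :=
  (1 / Real.sqrt (1 + R.trace)) • vee3 (R - Rᵀ)

/-- `E_c(R) = ½((tr R)·I - Rᵀ)`. -/
def Ec (R : Matrix (Fin 3) (Fin 3) ℝ) : Matrix (Fin 3) (Fin 3) ℝ :=
  (1 / 2 : ℝ) • (R.trace • (1 : Matrix (Fin 3) (Fin 3) ℝ) - Rᵀ)

/-- `E(R) = (1/√(1+tr R))(2E_c(R) + ½ e_R e_Rᵀ)`. -/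
def Emat (R : Matrix (Fin 3) (Fin 3) ℝ) : Matrix (Fin 3) (Fin 3) ℝ :=
  (1 / Real.sqrt (1 + R.trace)) •
    ((2 : ℝ) • Ec R + (1 / 2 : ℝ) • vecMulVec (eR R) (eR R))

/-- `‖(R-Rᵀ)∨‖² = (3 - tr R)(1 + tr R)` on SO(3); hence for
`tr R ≠ -1` the squared norm of the generalized error vector is the chordal metric. -/
theorem eR_norm_sq_eq_chordal (R : Matrix (Fin 3) (Fin 3) ℝ)
    (hR1 : Rᵀ * R = 1) (hR2 : R * Rᵀ = 1) (hR3 : R.det = 1) :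
    vee3 (R - Rᵀ) ⬝ᵥ vee3 (R - Rᵀ) = (3 - R.trace) * (1 + R.trace) ∧
      (R.trace ≠ -1 → eR R ⬝ᵥ eR R = ((1 : Matrix (Fin 3) (Fin 3) ℝ) - R).trace) := by
  have e1 : ∀ i j, (Rᵀ * R) i j = (1 : Matrix (Fin 3) (Fin 3) ℝ) i j := fun i j => by rw [hR1]
  have e2 : ∀ i j, (R * Rᵀ) i j = (1 : Matrix (Fin 3) (Fin 3) ℝ) i j := fun i j => by rw [hR2]
  simp only [mul_apply, transpose_apply, Fin.sum_univ_three, one_apply] at e1 e2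
  have hC1 := e1 0 0; have hC2 := e1 1 1; have hC3 := e1 2 2
  have hN00 := e2 0 0; have hN01 := e2 0 1; have hN02 := e2 0 2
  have hN10 := e2 1 0; have hN11 := e2 1 1; have hN12 := e2 1 2
  have hN20 := e2 2 0; have hN21 := e2 2 1; have hN22 := e2 2 2
  norm_num [Fin.ext_iff] at hC1 hC2 hC3 hN00 hN01 hN02 hN10 hN11 hN12 hN20 hN21 hN22
  rw [Matrix.det_fin_three] at hR3
  set a := R 0 0; set b := R 0 1; set c := R 0 2
  set d := R 1 0; set e := R 1 1; set f := R 1 2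
  set g := R 2 0; set h := R 2 1; set i := R 2 2
  have htr : R.trace = a + e + i := by rw [Matrix.trace_fin_three]
  have key : vee3 (R - Rᵀ) ⬝ᵥ vee3 (R - Rᵀ) = (3 - R.trace) * (1 + R.trace) := by
    simp only [vee3, dotProduct, Matrix.sub_apply, transpose_apply, Fin.sum_univ_three,
      Matrix.cons_val_zero, Matrix.cons_val_one, Matrix.head_cons, Matrix.cons_val_two,
      Matrix.tail_cons, htr]
    linear_combination hC1 + hC2 + hC3 + 2 * (a + e + i) * hR3
      - 2 * ((e*i - f*h) * hN00 + (c*h - b*i) * hN10 + (b*f - c*e) * hN20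
           + (f*g - d*i) * hN01 + (a*i - c*g) * hN11 + (c*d - a*f) * hN21
           + (d*h - e*g) * hN02 + (b*g - a*h) * hN12 + (a*e - b*d) * hN22)
  refine ⟨key, fun htr1 => ?_⟩
  have hnn : (0:ℝ) ≤ (3 - R.trace) * (1 + R.trace) := by
    rw [← key]
    simp only [vee3, dotProduct, Fin.sum_univ_three, Matrix.cons_val_zero,
      Matrix.cons_val_one, Matrix.head_cons, Matrix.cons_val_two, Matrix.tail_cons]
    nlinarith [mul_self_nonneg (h - f), mul_self_nonneg (c - g), mul_self_nonneg (d - b)]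
  have h1 : (0:ℝ) ≤ 1 + R.trace := by nlinarith [hnn]
  have h2 : (0:ℝ) < 1 + R.trace := lt_of_le_of_ne h1 (by intro hc; exact htr1 (by linarith))
  have hs : Real.sqrt (1 + R.trace) ^ 2 = 1 + R.trace := Real.sq_sqrt h1
  have hspos : 0 < Real.sqrt (1 + R.trace) := Real.sqrt_pos.mpr h2
  have : eR R ⬝ᵥ eR R =
      (1 / Real.sqrt (1 + R.trace)) ^ 2 * (vee3 (R - Rᵀ) ⬝ᵥ vee3 (R - Rᵀ)) := by
    rw [eR, smul_dotProduct, dotProduct_smul, smul_eq_mul, smul_eq_mul]; ring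
  rw [this, key, Matrix.trace_sub, Matrix.trace_one]
  have hne : Real.sqrt (1 + R.trace) ≠ 0 := ne_of_gt hspos
  field_simp
  rw [hs, Fintype.card_fin]; push_cast; ring
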